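/- For positive integers m, k, ℓ and all p, q ∈ [0,1], one has Λ_{m,k}(p)·Λ_{m,ℓ}(q/m) ≤ Λ_{m,k+ℓ}(p·q)/m. -/

import Mathlib

open Real

/-- The function `Λ_{m,k}` from the paper (extended by `0` to `p ≤ 0`). -/
noncomputable def Lam (m k : ℕ) (p : ℝ) : ℝ :=
  if p ≤ 0 then 0
  else if p ≤ 1 / (m : ℝ) then
    p * ((1 / (k : ℝ)) * Real.log (Real.exp k * (m : ℝ) ^ (k - 1) / p)) ^ ((k : ℝ) / 2)
  else
    p * Real.sqrt (Real.log (Real.exp 1 / p)) *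
      Real.log (Real.exp 1 * m) ^ (((k : ℝ) - 1) / 2)

private lemma lam_log_eval (m k : ℕ) (hm : 1 ≤ m) (hk : 1 ≤ k) {p : ℝ} (hp : 0 < p) :
    Real.log (Real.exp k * (m : ℝ) ^ (k - 1) / p)
      = (k : ℝ) + ((k : ℝ) - 1) * Real.log m - Real.log p := by
  have hm0 : (0 : ℝ) < m := by exact_mod_cast Nat.lt_of_lt_of_le Nat.zero_lt_one hm
  rw [Real.log_div (by positivity) hp.ne', Real.log_mul (Real.exp_ne_zero _) (by positivity),
    Real.log_exp, Real.log_pow]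
  have : ((k - 1 : ℕ) : ℝ) = (k : ℝ) - 1 := by
    push_cast [Nat.cast_sub hk]; ring
  rw [this]

private lemma lam_small (m k : ℕ) (hm : 1 ≤ m) (hk : 1 ≤ k) {p : ℝ} (hp : 0 < p)
    (hpm : p ≤ 1 / (m : ℝ)) :
    Lam m k p = p * ((1 / (k : ℝ)) *
      ((k : ℝ) + ((k : ℝ) - 1) * Real.log m - Real.log p)) ^ ((k : ℝ) / 2) := by
  rw [Lam, if_neg (not_le.mpr hp), if_pos hpm, lam_log_eval m k hm hk hp]

private lemma lam_big (m k : ℕ) (hm : 1 ≤ m) {p : ℝ} (hp : 0 < p) (hpm : 1 / (m : ℝ) < p) :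
    Lam m k p = p * ((1 - Real.log p) ^ ((1 : ℝ) / 2)) *
      ((1 + Real.log m) ^ (((k : ℝ) - 1) / 2)) := by
  have h1 : Real.log (Real.exp 1 / p) = 1 - Real.log p := by
    rw [Real.log_div (Real.exp_ne_zero 1) hp.ne', Real.log_exp]
  have hm0 : (0 : ℝ) < m := by exact_mod_cast Nat.lt_of_lt_of_le Nat.zero_lt_one hm
  have h2 : Real.log (Real.exp 1 * m) = 1 + Real.log m := by
    rw [Real.log_mul (Real.exp_ne_zero 1) hm0.ne', Real.log_exp]
  rw [Lam, if_neg (not_le.mpr hp), if_neg (not_le.mpr hpm), h1, h2,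
    Real.sqrt_eq_rpow]

private lemma core1a (k l : ℕ) (hk : 1 ≤ k) (hl : 1 ≤ l) {x y : ℝ} (hx : 0 ≤ x) (hy : 0 ≤ y) :
    (1 / (k : ℝ) * x) ^ ((k : ℝ) / 2) * (1 / (l : ℝ) * y) ^ ((l : ℝ) / 2)
      ≤ (1 / ((k : ℝ) + (l : ℝ)) * (x + y)) ^ (((k : ℝ) + (l : ℝ)) / 2) := by
  have hK : (0 : ℝ) < k := by exact_mod_cast Nat.lt_of_lt_of_le Nat.zero_lt_one hk
  have hL : (0 : ℝ) < l := by exact_mod_cast Nat.lt_of_lt_of_le Nat.zero_lt_one hl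
  set K := (k : ℝ); set L := (l : ℝ)
  have h := Real.geom_mean_le_arith_mean2_weighted
    (w₁ := K / (K + L)) (w₂ := L / (K + L)) (p₁ := x / K) (p₂ := y / L)
    (by positivity) (by positivity) (by positivity) (by positivity) (by field_simp)
  have e1 : K / 2 = K / (K + L) * ((K + L) / 2) := by field_simp
  have e2 : L / 2 = L / (K + L) * ((K + L) / 2) := by field_simp
  calc (1 / K * x) ^ (K / 2) * (1 / L * y) ^ (L / 2)
      = ((x / K) ^ (K / (K + L))) ^ ((K + L) / 2) * ((y / L) ^ (L / (K + L))) ^ ((K + L) / 2) := by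
        rw [one_div_mul_eq_div, one_div_mul_eq_div, e1, e2,
          Real.rpow_mul (by positivity), Real.rpow_mul (by positivity)]
    _ = ((x / K) ^ (K / (K + L)) * (y / L) ^ (L / (K + L))) ^ ((K + L) / 2) := by
        rw [Real.mul_rpow (by positivity) (by positivity)]
    _ ≤ (K / (K + L) * (x / K) + L / (K + L) * (y / L)) ^ ((K + L) / 2) :=
        Real.rpow_le_rpow (by positivity) h (by positivity)
    _ = (1 / (K + L) * (x + y)) ^ ((K + L) / 2) := by
        congr 1; field_simp

private lemma core1b (k l : ℕ) (hk : 1 ≤ k) (hl : 1 ≤ l) {u v y : ℝ} (hu : 0 ≤ u) (hv : 0 ≤ v)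
    (hy : 0 ≤ y) :
    u ^ ((1 : ℝ) / 2) * v ^ (((k : ℝ) - 1) / 2) * (1 / (l : ℝ) * y) ^ ((l : ℝ) / 2)
      ≤ (1 / ((k : ℝ) + (l : ℝ)) * (u + ((k : ℝ) - 1) * v + y)) ^ (((k : ℝ) + (l : ℝ)) / 2) := by
  have hK : (1 : ℝ) ≤ k := by exact_mod_cast hk
  have hL : (0 : ℝ) < l := by exact_mod_cast Nat.lt_of_lt_of_le Nat.zero_lt_one hl
  set K := (k : ℝ); set L := (l : ℝ)
  have hKL : (0 : ℝ) < K + L := by linarith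
  have h := Real.geom_mean_le_arith_mean3_weighted
    (w₁ := 1 / (K + L)) (w₂ := (K - 1) / (K + L)) (w₃ := L / (K + L))
    (p₁ := u) (p₂ := v) (p₃ := y / L)
    (by positivity) (div_nonneg (by linarith) (by positivity)) (by positivity) hu hv
    (by positivity) (by field_simp; ring)
  have e1 : (1 : ℝ) / 2 = 1 / (K + L) * ((K + L) / 2) := by field_simp
  have e2 : (K - 1) / 2 = (K - 1) / (K + L) * ((K + L) / 2) := by field_simp
  have e3 : L / 2 = L / (K + L) * ((K + L) / 2) := by field_simp
  calc u ^ ((1 : ℝ) / 2) * v ^ ((K - 1) / 2) * (1 / L * y) ^ (L / 2)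
      = (u ^ (1 / (K + L))) ^ ((K + L) / 2) * (v ^ ((K - 1) / (K + L))) ^ ((K + L) / 2) *
          ((y / L) ^ (L / (K + L))) ^ ((K + L) / 2) := by
        rw [one_div_mul_eq_div, e1, e2, e3, Real.rpow_mul hu, Real.rpow_mul hv,
          Real.rpow_mul (by positivity)]
    _ = (u ^ (1 / (K + L)) * v ^ ((K - 1) / (K + L)) * (y / L) ^ (L / (K + L)))
          ^ ((K + L) / 2) := by
        rw [Real.mul_rpow (by positivity) (by positivity),
          Real.mul_rpow (by positivity) (by positivity)]
    _ ≤ (1 / (K + L) * u + (K - 1) / (K + L) * v + L / (K + L) * (y / L)) ^ ((K + L) / 2) :=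
        Real.rpow_le_rpow (by positivity) h (by positivity)
    _ = (1 / (K + L) * (u + (K - 1) * v + y)) ^ ((K + L) / 2) := by
        congr 1; field_simp

private lemma core2 (l : ℕ) (hl : 1 ≤ l) {a b M : ℝ} (ha : 0 ≤ a) (hb : 0 ≤ b)
    (hM : 1 + a + b ≤ M) :
    (1 + a) * (M + b / (l : ℝ)) ^ ((l : ℝ)) ≤ (1 + a + b) * M ^ ((l : ℝ)) := by
  have hL : (0 : ℝ) < l := by exact_mod_cast Nat.lt_of_lt_of_le Nat.zero_lt_one hl
  set L := (l : ℝ)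
  have hab : (0 : ℝ) < 1 + a + b := by linarith
  have hM0 : (0 : ℝ) < M := by linarith
  -- step 1 : (M + b/L)^L ≤ M^L * exp (b/M)
  have hsplit : M + b / L = M * (1 + b / (L * M)) := by field_simp
  have h1 : (M + b / L) ^ L ≤ M ^ L * Real.exp (b / M) := by
    have hle : 1 + b / (L * M) ≤ Real.exp (b / (L * M)) := by
      have := Real.add_one_le_exp (b / (L * M)); linarith
    have h2 : (1 + b / (L * M)) ^ L ≤ (Real.exp (b / (L * M))) ^ L :=
      Real.rpow_le_rpow (by positivity) hle (by positivity)
    have h3 : (Real.exp (b / (L * M))) ^ L = Real.exp (b / M) := by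
      rw [← Real.exp_mul]
      congr 1
      field_simp
    calc (M + b / L) ^ L = M ^ L * (1 + b / (L * M)) ^ L := by
          rw [hsplit, Real.mul_rpow hM0.le (by positivity)]
      _ ≤ M ^ L * Real.exp (b / M) := by
          rw [← h3]; exact mul_le_mul_of_nonneg_left h2 (by positivity)
  -- step 2 : (1 + a) * exp (b/M) ≤ 1 + a + b
  have h2 : (1 + a) * Real.exp (b / M) ≤ 1 + a + b := by
    have hstep : b / M ≤ Real.log ((1 + a + b) / (1 + a)) := by
      have hx : (0 : ℝ) < (1 + a + b) / (1 + a) := by positivity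
      have hxi : Real.log (((1 + a + b) / (1 + a))⁻¹) ≤ ((1 + a + b) / (1 + a))⁻¹ - 1 :=
        Real.log_le_sub_one_of_pos (by positivity)
      rw [Real.log_inv] at hxi
      have hinv : ((1 + a + b) / (1 + a))⁻¹ = (1 + a) / (1 + a + b) := by
        rw [inv_div]
      rw [hinv] at hxi
      have hbb : b / M ≤ b / (1 + a + b) := by
        apply div_le_div_of_nonneg_left hb hab hM
      have : (1 + a) / (1 + a + b) - 1 = -(b / (1 + a + b)) := by field_simp; ring
      rw [this] at hxi
      linarith
    have := Real.exp_le_exp.mpr hstep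
    rw [Real.exp_log (by positivity)] at this
    calc (1 + a) * Real.exp (b / M) ≤ (1 + a) * ((1 + a + b) / (1 + a)) :=
          mul_le_mul_of_nonneg_left this (by positivity)
      _ = 1 + a + b := by field_simp
  calc (1 + a) * (M + b / L) ^ L ≤ (1 + a) * (M ^ L * Real.exp (b / M)) :=
        mul_le_mul_of_nonneg_left h1 (by positivity)
    _ = ((1 + a) * Real.exp (b / M)) * M ^ L := by ring
    _ ≤ (1 + a + b) * M ^ L := mul_le_mul_of_nonneg_right h2 (by positivity)

private lemma core2' (k l : ℕ) (hl : 1 ≤ l) {a b M : ℝ} (ha : 0 ≤ a) (hb : 0 ≤ b)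
    (hsum : 1 + a + b ≤ M) :
    (1 + a) ^ ((1 : ℝ) / 2) * M ^ (((k : ℝ) - 1) / 2) *
        (1 / (l : ℝ) * ((l : ℝ) * M + b)) ^ ((l : ℝ) / 2)
      ≤ (1 + a + b) ^ ((1 : ℝ) / 2) * M ^ (((k : ℝ) + (l : ℝ) - 1) / 2) := by
  have hL : (0 : ℝ) < l := by exact_mod_cast Nat.lt_of_lt_of_le Nat.zero_lt_one hl
  set L := (l : ℝ)
  have hab : (0 : ℝ) < 1 + a + b := by linarith
  have hM0 : (0 : ℝ) < M := by linarith
  have hbase : 1 / L * (L * M + b) = M + b / L := by field_simp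
  have key := core2 l hl ha hb hsum
  -- take square roots
  have hkey : ((1 + a) * (M + b / L) ^ L) ^ ((1 : ℝ) / 2)
      ≤ ((1 + a + b) * M ^ L) ^ ((1 : ℝ) / 2) :=
    Real.rpow_le_rpow (by positivity) key (by norm_num)
  have hL1 : ((M + b / L) ^ L) ^ ((1 : ℝ) / 2) = (M + b / L) ^ (L / 2) := by
    rw [← Real.rpow_mul (by positivity)]; congr 1; ring
  have hL2 : (M ^ L) ^ ((1 : ℝ) / 2) = M ^ (L / 2) := by
    rw [← Real.rpow_mul hM0.le]; congr 1; ring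
  rw [Real.mul_rpow (by positivity) (by positivity),
    Real.mul_rpow (by positivity) (by positivity), hL1, hL2] at hkey
  have hMsplit : M ^ (((k : ℝ) + L - 1) / 2) = M ^ (((k : ℝ) - 1) / 2) * M ^ (L / 2) := by
    rw [← Real.rpow_add hM0]; congr 1; ring
  calc (1 + a) ^ ((1 : ℝ) / 2) * M ^ (((k : ℝ) - 1) / 2) * (1 / L * (L * M + b)) ^ (L / 2)
      = ((1 + a) ^ ((1 : ℝ) / 2) * (M + b / L) ^ (L / 2)) * M ^ (((k : ℝ) - 1) / 2) := by
        rw [hbase]; ring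
    _ ≤ ((1 + a + b) ^ ((1 : ℝ) / 2) * M ^ (L / 2)) * M ^ (((k : ℝ) - 1) / 2) :=
        mul_le_mul_of_nonneg_right hkey (by positivity)
    _ = (1 + a + b) ^ ((1 : ℝ) / 2) * M ^ (((k : ℝ) + L - 1) / 2) := by
        rw [hMsplit]; ring

theorem Lam_collapsing (m k l : ℕ) (hm : 1 ≤ m) (hk : 1 ≤ k) (hl : 1 ≤ l) (p q : ℝ)
    (hp : p ∈ Set.Icc (0 : ℝ) 1) (hq : q ∈ Set.Icc (0 : ℝ) 1) :
    Lam m k p * Lam m l (q / m) ≤ Lam m (k + l) (p * q) / m := by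
  obtain ⟨hp0, hp1⟩ := hp
  obtain ⟨hq0, hq1⟩ := hq
  have hm1 : (1 : ℝ) ≤ m := by exact_mod_cast hm
  have hm0 : (0 : ℝ) < m := by linarith
  rcases eq_or_lt_of_le hp0 with h | hp0'
  · rw [← h]; simp [Lam]
  rcases eq_or_lt_of_le hq0 with h | hq0'
  · rw [← h]; simp [Lam]
  set c := Real.log m with hc
  have hc0 : 0 ≤ c := Real.log_nonneg hm1
  have hlp : Real.log p ≤ 0 := Real.log_nonpos hp0'.le hp1
  have hlq : Real.log q ≤ 0 := Real.log_nonpos hq0'.le hq1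
  have hK1 : (1 : ℝ) ≤ k := by exact_mod_cast hk
  have hL1 : (1 : ℝ) ≤ l := by exact_mod_cast hl
  have hkl : 1 ≤ k + l := le_trans hk (Nat.le_add_right k l)
  have hqm0 : 0 < q / (m : ℝ) := by positivity
  have hqm1 : q / (m : ℝ) ≤ 1 / (m : ℝ) := by gcongr
  have hpq0 : 0 < p * q := mul_pos hp0' hq0'
  -- evaluate the middle factor
  have hY : Lam m l (q / m) = (q / m) *
      ((1 / (l : ℝ)) * ((l : ℝ) + (l : ℝ) * c - Real.log q)) ^ ((l : ℝ) / 2) := by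
    rw [lam_small m l hm hl hqm0 hqm1, Real.log_div hq0'.ne' hm0.ne']
    have : (l : ℝ) + ((l : ℝ) - 1) * c - (Real.log q - c) = (l : ℝ) + (l : ℝ) * c - Real.log q := by
      ring
    rw [this]
  by_cases hpq : p * q ≤ 1 / (m : ℝ)
  · -- RHS in the small branch
    have hZ : Lam m (k + l) (p * q) = (p * q) * ((1 / ((k : ℝ) + (l : ℝ))) *
        (((k : ℝ) + (l : ℝ)) + ((k : ℝ) + (l : ℝ) - 1) * c - Real.log p - Real.log q))
          ^ (((k : ℝ) + (l : ℝ)) / 2) := by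
      rw [lam_small m (k + l) hm hkl hpq0 hpq, Real.log_mul hp0'.ne' hq0'.ne']
      push_cast
      rw [← hc]
      ring_nf
    by_cases hpm : p ≤ 1 / (m : ℝ)
    · have hX : Lam m k p = p *
          ((1 / (k : ℝ)) * ((k : ℝ) + ((k : ℝ) - 1) * c - Real.log p)) ^ ((k : ℝ) / 2) :=
        lam_small m k hm hk hp0' hpm
      have hx : 0 ≤ (k : ℝ) + ((k : ℝ) - 1) * c - Real.log p := by
        nlinarith
      have hy : 0 ≤ (l : ℝ) + (l : ℝ) * c - Real.log q := by nlinarith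
      have key := core1a k l hk hl hx hy
      rw [hX, hY, hZ]
      have hsum : ((k : ℝ) + ((k : ℝ) - 1) * c - Real.log p) +
          ((l : ℝ) + (l : ℝ) * c - Real.log q)
          = ((k : ℝ) + (l : ℝ)) + ((k : ℝ) + (l : ℝ) - 1) * c - Real.log p - Real.log q := by
        ring
      rw [hsum] at key
      calc p * ((1 / (k : ℝ)) * ((k : ℝ) + ((k : ℝ) - 1) * c - Real.log p)) ^ ((k : ℝ) / 2) *
            (q / m * ((1 / (l : ℝ)) * ((l : ℝ) + (l : ℝ) * c - Real.log q)) ^ ((l : ℝ) / 2))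
          = (p * q / m) *
              (((1 / (k : ℝ)) * ((k : ℝ) + ((k : ℝ) - 1) * c - Real.log p)) ^ ((k : ℝ) / 2) *
               ((1 / (l : ℝ)) * ((l : ℝ) + (l : ℝ) * c - Real.log q)) ^ ((l : ℝ) / 2)) := by
            ring
        _ ≤ (p * q / m) * ((1 / ((k : ℝ) + (l : ℝ)) *
              (((k : ℝ) + (l : ℝ)) + ((k : ℝ) + (l : ℝ) - 1) * c - Real.log p - Real.log q))
                ^ (((k : ℝ) + (l : ℝ)) / 2)) :=
            mul_le_mul_of_nonneg_left key (by positivity)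
        _ = p * q * ((1 / ((k : ℝ) + (l : ℝ)) *
              (((k : ℝ) + (l : ℝ)) + ((k : ℝ) + (l : ℝ) - 1) * c - Real.log p - Real.log q))
                ^ (((k : ℝ) + (l : ℝ)) / 2)) / m := by
            ring
    · push_neg at hpm
      have hX : Lam m k p = p * ((1 - Real.log p) ^ ((1 : ℝ) / 2)) *
          ((1 + c) ^ (((k : ℝ) - 1) / 2)) := lam_big m k hm hp0' hpm
      have hu : (0 : ℝ) ≤ 1 - Real.log p := by linarith
      have hv : (0 : ℝ) ≤ 1 + c := by linarith
      have hy : 0 ≤ (l : ℝ) + (l : ℝ) * c - Real.log q := by nlinarith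
      have key := core1b k l hk hl hu hv hy
      have hsum : (1 - Real.log p) + ((k : ℝ) - 1) * (1 + c) +
          ((l : ℝ) + (l : ℝ) * c - Real.log q)
          = ((k : ℝ) + (l : ℝ)) + ((k : ℝ) + (l : ℝ) - 1) * c - Real.log p - Real.log q := by
        ring
      rw [hsum] at key
      rw [hX, hY, hZ]
      calc p * (1 - Real.log p) ^ ((1 : ℝ) / 2) * (1 + c) ^ (((k : ℝ) - 1) / 2) *
            (q / m * ((1 / (l : ℝ)) * ((l : ℝ) + (l : ℝ) * c - Real.log q)) ^ ((l : ℝ) / 2))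
          = (p * q / m) * ((1 - Real.log p) ^ ((1 : ℝ) / 2) * (1 + c) ^ (((k : ℝ) - 1) / 2) *
              ((1 / (l : ℝ)) * ((l : ℝ) + (l : ℝ) * c - Real.log q)) ^ ((l : ℝ) / 2)) := by
            ring
        _ ≤ (p * q / m) * ((1 / ((k : ℝ) + (l : ℝ)) *
              (((k : ℝ) + (l : ℝ)) + ((k : ℝ) + (l : ℝ) - 1) * c - Real.log p - Real.log q))
                ^ (((k : ℝ) + (l : ℝ)) / 2)) :=
            mul_le_mul_of_nonneg_left key (by positivity)
        _ = p * q * ((1 / ((k : ℝ) + (l : ℝ)) *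
              (((k : ℝ) + (l : ℝ)) + ((k : ℝ) + (l : ℝ) - 1) * c - Real.log p - Real.log q))
                ^ (((k : ℝ) + (l : ℝ)) / 2)) / m := by
            ring
  · push_neg at hpq
    have hpm : 1 / (m : ℝ) < p := lt_of_lt_of_le hpq (by nlinarith)
    have hX : Lam m k p = p * ((1 - Real.log p) ^ ((1 : ℝ) / 2)) *
        ((1 + c) ^ (((k : ℝ) - 1) / 2)) := lam_big m k hm hp0' hpm
    have hZ : Lam m (k + l) (p * q) = (p * q) *
        ((1 - Real.log p - Real.log q) ^ ((1 : ℝ) / 2)) *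
        ((1 + c) ^ (((k : ℝ) + (l : ℝ) - 1) / 2)) := by
      rw [lam_big m (k + l) hm hpq0 hpq, Real.log_mul hp0'.ne' hq0'.ne']
      push_cast
      rw [← hc]
      ring_nf
    have ha : (0 : ℝ) ≤ -Real.log p := by linarith
    have hb : (0 : ℝ) ≤ -Real.log q := by linarith
    have hsum : 1 + -Real.log p + -Real.log q ≤ 1 + c := by
      have h := Real.log_le_log (by positivity) hpq.le
      rw [Real.log_mul hp0'.ne' hq0'.ne', one_div, Real.log_inv] at h
      linarith
    have key := core2' k l hl ha hb hsum
    have e1 : (1 : ℝ) + -Real.log p = 1 - Real.log p := by ring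
    have e2 : (1 : ℝ) + -Real.log p + -Real.log q = 1 - Real.log p - Real.log q := by ring
    have e3 : 1 / (l : ℝ) * ((l : ℝ) * (1 + c) + -Real.log q)
        = 1 / (l : ℝ) * ((l : ℝ) + (l : ℝ) * c - Real.log q) := by ring
    rw [e2, e1, e3] at key
    rw [hX, hY, hZ]
    calc p * (1 - Real.log p) ^ ((1 : ℝ) / 2) * (1 + c) ^ (((k : ℝ) - 1) / 2) *
          (q / m * ((1 / (l : ℝ)) * ((l : ℝ) + (l : ℝ) * c - Real.log q)) ^ ((l : ℝ) / 2))
        = (p * q / m) * ((1 - Real.log p) ^ ((1 : ℝ) / 2) * (1 + c) ^ (((k : ℝ) - 1) / 2) *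
            ((1 / (l : ℝ)) * ((l : ℝ) + (l : ℝ) * c - Real.log q)) ^ ((l : ℝ) / 2)) := by
          ring
      _ ≤ (p * q / m) * ((1 - Real.log p - Real.log q) ^ ((1 : ℝ) / 2) *
            (1 + c) ^ (((k : ℝ) + (l : ℝ) - 1) / 2)) :=
          mul_le_mul_of_nonneg_left key (by positivity)
      _ = p * q * (1 - Real.log p - Real.log q) ^ ((1 : ℝ) / 2) *
            (1 + c) ^ (((k : ℝ) + (l : ℝ) - 1) / 2) / m := by
          ring
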